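/- Let Φ be a root system in a real vector space V with coweight lattice P, simple roots Δ, fundamental coweights ω_{α∨} and fundamental weights ω_α. Let Q be a W-invariant positive quadratic form on the coroot lattice and n a positive integer. Define Φ_y^{Q,n} := {β ∈ Φ : β(y) ∈ ℤ and Q(β∨)β(y) ∈ nℤ} and Φ_x := {β ∈ Φ : β∨(x) ∈ ℤ} (for x in the weight space). If y = Σ_{α∈Δ} a_α ω_{α∨} with a_α ∈ ℤ, and x = Σ_{α∈Δ} (a_α Q(α∨)/n) ω_α, then Φ_y^{Q,n} = Φ_x. -/

import Mathlib

/-!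
STATEMENT 2: Let β be a root of an irreducible root system with simple roots
indexed by `ι`, with coroot `β∨ = ∑ b_i α_i∨` and `Q(β∨) = Qβ`, so that
`β = ∑ (b_i Q(α_i∨)/Qβ) α_i` (the key fact `Qβ ∣ b_i · Q(α_i∨)` holds for all i).
Let `y = ∑ a_i ω_{α_i∨}` (a ∈ ℤ, fundamental coweights) and
`x = ∑ (a_i Q(α_i∨)/n) ω_{α_i}` (fundamental weights).  Then
`β(y) = (∑ a_i b_i Q(α_i∨)) / Qβ` and `β∨(x) = (∑ a_i b_i Q(α_i∨)) / n`, and the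
statement `Φ_y^{Q,n} = Φ_x` amounts, root by root, to the equivalence:
`β(y) ∈ ℤ ∧ Q(β∨)·β(y) ∈ nℤ  ↔  β∨(x) ∈ ℤ`.
-/
theorem stmt2 {ι : Type*} [Fintype ι]
    (Qs : ι → ℤ) (hQs : ∀ i, 0 < Qs i)      -- Q(α_i∨) for the simple coroots
    (n : ℤ) (hn : 0 < n)
    (a : ι → ℤ)                              -- coordinates of y in fundamental coweights
    (b : ι → ℤ) (Qβ : ℤ) (hQβ : 0 < Qβ)      -- coroot coordinates of β and Q(β∨)
    (hkey : ∀ i, Qβ ∣ b i * Qs i) :          -- β = ∑ (bᵢ Q(αᵢ∨)/Q(β∨)) αᵢ has ℤ-coeffs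
    -- β(y) := S / Qβ  and  β∨(x) := S / n  where  S := ∑ aᵢ bᵢ Q(αᵢ∨)
    ((∃ k : ℤ, ((∑ i, a i * b i * Qs i : ℤ) : ℚ) / (Qβ : ℚ) = (k : ℚ)) ∧
      (∃ k : ℤ, (Qβ : ℚ) * (((∑ i, a i * b i * Qs i : ℤ) : ℚ) / (Qβ : ℚ)) = (n : ℚ) * k))
    ↔ (∃ k : ℤ, ((∑ i, a i * b i * Qs i : ℤ) : ℚ) / (n : ℚ) = (k : ℚ)) := by
  set S : ℤ := ∑ i, a i * b i * Qs i with hS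
  have hQβ0 : (Qβ : ℚ) ≠ 0 := Int.cast_ne_zero.mpr hQβ.ne'
  have hn0 : (n : ℚ) ≠ 0 := Int.cast_ne_zero.mpr hn.ne'
  have hdvd : Qβ ∣ S := by
    exact Finset.dvd_sum fun i _ => by
      have := hkey i
      calc Qβ ∣ b i * Qs i := this
        _ ∣ a i * b i * Qs i := ⟨a i, by ring⟩
  constructor
  · rintro ⟨-, k, hk⟩
    refine ⟨k, ?_⟩
    rw [mul_div_cancel₀ _ hQβ0] at hk
    field_simp [hk]
    exact hk
  · rintro ⟨k, hk⟩
    rw [div_eq_iff hn0] at hk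
    have hSnk : (S : ℚ) = n * k := by push_cast at hk ⊢; linarith
    obtain ⟨m, hm⟩ := hdvd
    refine ⟨⟨m, ?_⟩, ⟨k, ?_⟩⟩
    · rw [div_eq_iff hQβ0]; push_cast; rw_mod_cast [hm]; push_cast; ring
    · rw [mul_div_cancel₀ _ hQβ0]; exact hSnk
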